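/- Let C be a nonempty closed convex subset of a real Hilbert space H and let V be a closed linear subspace of H. Then there exists a closed convex set D with P_C + P_V = P_D if and only if C ⊥ V (every element of C is orthogonal to every element of V); in that case D = C + V and P_C + P_V = P_{C+V}. -/

import Mathlib

open RealInnerProductSpace Pointwise

variable {H : Type*} [NormedAddCommGroup H] [InnerProductSpace ℝ H] [CompleteSpace H]

/-- `P` is the metric projection (nearest-point map) onto `C`. -/
def IsProjOn (C : Set H) (P : H → H) : Prop :=
  ∀ x, P x ∈ C ∧ ∀ y ∈ C, ‖x - P x‖ ≤ ‖x - y‖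

theorem isProjOn_fixed {D : Set H} {P : H → H} (h : IsProjOn D P) {d : H} (hd : d ∈ D) :
    P d = d := by
  have h2 := (h d).2 d hd
  rw [sub_self, norm_zero] at h2
  have h3 : d - P d = 0 := norm_le_zero_iff.1 h2
  exact (sub_eq_zero.1 h3).symm

theorem isProjOn_inner_le {C : Set H} (hC : Convex ℝ C) {P : H → H} (h : IsProjOn C P)
    (x : H) {c : H} (hc : c ∈ C) : ⟪x - P x, c - P x⟫ ≤ 0 := by
  have hmem := (h x).1
  haveI : Nonempty C := ⟨⟨P x, hmem⟩⟩
  have hinf : ‖x - P x‖ = ⨅ w : C, ‖x - (w : H)‖ :=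
    le_antisymm (le_ciInf fun w => (h x).2 w w.2)
      (ciInf_le (⟨0, by rintro _ ⟨w, rfl⟩; exact norm_nonneg _⟩ :
        BddBelow (Set.range fun w : C => ‖x - (w : H)‖)) ⟨P x, hmem⟩)
  exact (norm_eq_iInf_iff_real_inner_le_zero hC hmem).1 hinf c hc

theorem pv_perp {V : Submodule ℝ H} {Pv : H → H} (hPv : IsProjOn (V : Set H) Pv)
    (x : H) {v : H} (hv : v ∈ V) : ⟪x - Pv x, v⟫ = 0 := by
  have hmem : Pv x ∈ V := (hPv x).1
  have h1 := isProjOn_inner_le V.convex hPv x (V.add_mem hmem hv)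
  have h2 := isProjOn_inner_le V.convex hPv x (V.sub_mem hmem hv)
  rw [add_sub_cancel_left] at h1
  rw [sub_sub_cancel_left, inner_neg_right] at h2
  linarith

theorem perp_unique {V : Submodule ℝ H} {x p q : H} (hp : p ∈ V) (hq : q ∈ V)
    (h1 : ∀ v ∈ V, ⟪x - p, v⟫ = 0) (h2 : ∀ v ∈ V, ⟪x - q, v⟫ = 0) : p = q := by
  have hpq : p - q ∈ V := V.sub_mem hp hq
  have h3 : ⟪p - q, p - q⟫ = 0 := by
    have e : p - q = (x - q) - (x - p) := by abel
    nth_rewrite 1 [e]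
    rw [inner_sub_left, h1 _ hpq, h2 _ hpq, sub_zero]
  exact sub_eq_zero.1 (inner_self_eq_zero.1 h3)

theorem pv_add {V : Submodule ℝ H} {Pv : H → H} (hPv : IsProjOn (V : Set H) Pv)
    (x : H) {v : H} (hv : v ∈ V) : Pv (x + v) = Pv x + v :=
  perp_unique (hPv _).1 (V.add_mem (hPv x).1 hv)
    (fun w hw => pv_perp hPv (x + v) hw)
    (fun w hw => by
      rw [show x + v - (Pv x + v) = x - Pv x from by abel]; exact pv_perp hPv x hw)

theorem isProjOn_sum {C : Set H} {V : Submodule ℝ H} {Pc Pv : H → H}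
    (hPc : IsProjOn C Pc) (hPv : IsProjOn (V : Set H) Pv)
    (hperp : ∀ c ∈ C, ∀ v ∈ (V : Set H), ⟪c, v⟫ = 0) :
    IsProjOn (C + (V : Set H)) (fun x => Pc x + Pv x) := by
  intro x
  refine ⟨Set.add_mem_add (hPc x).1 (hPv x).1, ?_⟩
  rintro y hy
  rw [Set.mem_add] at hy
  obtain ⟨c, hc, v, hv, rfl⟩ := hy
  have hPcC := (hPc x).1
  have hPvV : Pv x ∈ V := (hPv x).1
  have hw0 : ∀ u ∈ V, ⟪x - Pv x, u⟫ = 0 := fun u hu => pv_perp hPv x hu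
  have h1 : ⟪(x - Pv x) - Pc x, Pv x⟫ = 0 := by
    rw [inner_sub_left, hw0 _ hPvV, hperp _ hPcC _ hPvV, sub_zero]
  have h2 : ⟪(x - Pv x) - c, Pv x⟫ = 0 := by
    rw [inner_sub_left, hw0 _ hPvV, hperp _ hc _ hPvV, sub_zero]
  have h3 : ⟪(x - Pv x) - c, Pv x - v⟫ = 0 := by
    have hm : Pv x - v ∈ V := V.sub_mem hPvV hv
    rw [inner_sub_left, hw0 _ hm, hperp _ hc _ hm, sub_zero]
  have ha : ‖x - Pc x‖ ^ 2 = ‖(x - Pv x) - Pc x‖ ^ 2 + ‖Pv x‖ ^ 2 := by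
    rw [show x - Pc x = ((x - Pv x) - Pc x) + Pv x from by abel,
      pow_two, pow_two, pow_two, norm_add_sq_eq_norm_sq_add_norm_sq_real h1]
  have hb : ‖x - c‖ ^ 2 = ‖(x - Pv x) - c‖ ^ 2 + ‖Pv x‖ ^ 2 := by
    rw [show x - c = ((x - Pv x) - c) + Pv x from by abel,
      pow_two, pow_two, pow_two, norm_add_sq_eq_norm_sq_add_norm_sq_real h2]
  have hd : ‖x - (c + v)‖ ^ 2 = ‖(x - Pv x) - c‖ ^ 2 + ‖Pv x - v‖ ^ 2 := by
    rw [show x - (c + v) = ((x - Pv x) - c) + (Pv x - v) from by abel,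
      pow_two, pow_two, pow_two, norm_add_sq_eq_norm_sq_add_norm_sq_real h3]
  have hcineq : ‖x - Pc x‖ ≤ ‖x - c‖ := (hPc x).2 c hc
  have hsq : ‖x - Pc x‖ ^ 2 ≤ ‖x - c‖ ^ 2 := pow_le_pow_left₀ (norm_nonneg _) hcineq 2
  have he : x - (Pc x + Pv x) = (x - Pv x) - Pc x := by abel
  show ‖x - (Pc x + Pv x)‖ ≤ ‖x - (c + v)‖
  rw [he]
  nlinarith [norm_nonneg ((x - Pv x) - Pc x), norm_nonneg (x - (c + v)),
    sq_nonneg ‖Pv x - v‖]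

theorem closed_sum {C : Set H} {V : Submodule ℝ H} (hCcl : IsClosed C)
    (hVcl : IsClosed (V : Set H))
    (hperp : ∀ c ∈ C, ∀ v ∈ (V : Set H), ⟪c, v⟫ = 0) :
    IsClosed (C + (V : Set H)) := by
  haveI : CompleteSpace V := hVcl.completeSpace_coe
  have key : C + (V : Set H) = (fun z => z - (V.orthogonalProjectionOnto z : H)) ⁻¹' C := by
    ext z
    simp only [Set.mem_preimage, Set.mem_add]
    constructor
    · rintro ⟨c, hc, v, hv, rfl⟩
      have hproj : ((V.orthogonalProjectionOnto (c + v) : V) : H) = v :=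
        perp_unique (V.orthogonalProjectionOnto (c + v)).2 hv
          (fun w hw => Submodule.starProjection_inner_eq_zero (K := V) (c + v) w hw)
          (fun w hw => by rw [add_sub_cancel_right]; exact hperp c hc w hw)
      rw [hproj, add_sub_cancel_right]; exact hc
    · intro hz
      exact ⟨_, hz, _, (V.orthogonalProjectionOnto z).2, by abel⟩
  rw [key]
  exact IsClosed.preimage
    (continuous_id.sub (continuous_subtype_val.comp (V.orthogonalProjectionOnto).continuous)) hCcl

theorem stmt19 (C : Set H)
    (hCne : C.Nonempty) (hCcl : IsClosed C) (hCcv : Convex ℝ C)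
    (V : Submodule ℝ H) (hVcl : IsClosed (V : Set H))
    (Pc Pv : H → H) (hPc : IsProjOn C Pc) (hPv : IsProjOn (V : Set H) Pv) :
    ((∃ D : Set H, D.Nonempty ∧ IsClosed D ∧ Convex ℝ D ∧
        IsProjOn D (fun x => Pc x + Pv x))
      ↔ ∀ c ∈ C, ∀ v ∈ (V : Set H), ⟪c, v⟫ = 0)
    ∧ ((∀ c ∈ C, ∀ v ∈ (V : Set H), ⟪c, v⟫ = 0) →
        (∀ D : Set H, D.Nonempty → IsClosed D → Convex ℝ D →
            IsProjOn D (fun x => Pc x + Pv x) → D = C + (V : Set H)) ∧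
          IsProjOn (C + (V : Set H)) (fun x => Pc x + Pv x)) := by
  have hperp_of : (∃ D : Set H, D.Nonempty ∧ IsClosed D ∧ Convex ℝ D ∧
      IsProjOn D (fun x => Pc x + Pv x)) → ∀ c ∈ C, ∀ v ∈ (V : Set H), ⟪c, v⟫ = 0 := by
    rintro ⟨D, -, -, -, hD⟩ c hc v hv
    have hPcc : Pc c = c := isProjOn_fixed hPc hc
    have hPvc : Pv c ∈ V := (hPv c).1
    have hdD : Pc c + Pv c ∈ D := (hD c).1
    have hfix : Pc (Pc c + Pv c) + Pv (Pc c + Pv c) = Pc c + Pv c := isProjOn_fixed hD hdD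
    rw [hPcc] at hfix
    have hPvadd : Pv (c + Pv c) = Pv c + Pv c := pv_add hPv c hPvc
    rw [hPvadd] at hfix
    have hPcd : Pc (c + Pv c) = c - Pv c := by
      calc Pc (c + Pv c) = Pc (c + Pv c) + (Pv c + Pv c) - (Pv c + Pv c) := by abel
        _ = c + Pv c - (Pv c + Pv c) := by rw [hfix]
        _ = c - Pv c := by abel
    have hvar := isProjOn_inner_le hCcv hPc (c + Pv c) hc
    rw [hPcd, show c + Pv c - (c - Pv c) = Pv c + Pv c from by abel,
      show c - (c - Pv c) = Pv c from by abel, inner_add_left] at hvar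
    have hz : Pv c = 0 := real_inner_self_nonpos.1 (by linarith)
    have hfin := pv_perp hPv c hv
    rw [hz, sub_zero] at hfin
    exact hfin
  constructor
  · constructor
    · exact hperp_of
    · intro hperp
      obtain ⟨c, hc⟩ := hCne
      exact ⟨C + (V : Set H), ⟨c + 0, Set.add_mem_add hc V.zero_mem⟩,
        closed_sum hCcl hVcl hperp, hCcv.add V.convex, isProjOn_sum hPc hPv hperp⟩
  · intro hperp
    have hsum := isProjOn_sum hPc hPv hperp
    refine ⟨fun D hDne hDcl hDcv hD => ?_, hsum⟩
    ext z
    constructor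
    · intro hz
      have h : Pc z + Pv z = z := isProjOn_fixed hD hz
      rw [← h]; exact (hsum z).1
    · intro hz
      have h : Pc z + Pv z = z := isProjOn_fixed hsum hz
      rw [← h]; exact (hD z).1
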